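/- Let M_1, ..., M_m be pairwise disjoint finite sets with |M_k| = k, and let F_1 ⊆ F_2 ⊆ ... ⊆ F_m be a nested family of sets with |F_k| ≤ s·k for all k. Suppose that for every k, some M_ℓ with ℓ ≥ k is contained in F_k. Define B = {k : M_k ⊆ F_k}. Then for every T ∈ [m], ∑{k ∈ B : k < T} + min{ℓ ∈ B : ℓ ≥ T} ≤ s·T. -/
import Mathlib


/-- Combinatorial core of the reduction from online bidding to size-competitive
oblivious medians: with pairwise disjoint `M k` of size `k`, a nested family
`F k` of size at most `s k` such that each `F k` contains some `M l` with
`l ≥ k`, the set `B = {k : M k ⊆ F k}` is an `s`-competitive bid set: for every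
`T ∈ [m]`, the minimal `ℓ ∈ B` with `ℓ ≥ T` exists, and
`∑ {k ∈ B : k < T} + ℓ ≤ s T`. -/
theorem stmt15 {α : Type*} [DecidableEq α] (m : ℕ) (hm : 1 ≤ m)
    (M F : ℕ → Finset α) (s : ℝ)
    (hdisj : ∀ i ∈ Finset.Icc 1 m, ∀ j ∈ Finset.Icc 1 m, i ≠ j → Disjoint (M i) (M j))
    (hcard : ∀ k ∈ Finset.Icc 1 m, (M k).card = k)
    (hnest : ∀ k l, k ≤ l → l ≤ m → F k ⊆ F l)
    (hFcard : ∀ k ∈ Finset.Icc 1 m, ((F k).card : ℝ) ≤ s * k)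
    (hcover : ∀ k ∈ Finset.Icc 1 m, ∃ l, k ≤ l ∧ l ≤ m ∧ M l ⊆ F k) :
    ∀ T ∈ Finset.Icc 1 m, ∃ ℓ, ℓ ∈ Finset.Icc 1 m ∧ M ℓ ⊆ F ℓ ∧ T ≤ ℓ ∧
      (∀ ℓ' ∈ Finset.Icc 1 m, M ℓ' ⊆ F ℓ' → T ≤ ℓ' → ℓ ≤ ℓ') ∧
      ((∑ k ∈ (Finset.Icc 1 m).filter (fun k => M k ⊆ F k ∧ k < T), k : ℕ) : ℝ)
        + (ℓ : ℝ) ≤ s * T := by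
  classical
  intro T hT
  obtain ⟨hT1, hTm⟩ := Finset.mem_Icc.mp hT
  obtain ⟨l0, hTl0, hl0m, hMl0⟩ := hcover T hT
  have hl01 : 1 ≤ l0 := le_trans hT1 hTl0
  have hl0I : l0 ∈ Finset.Icc 1 m := Finset.mem_Icc.mpr ⟨hl01, hl0m⟩
  have hMl0' : M l0 ⊆ F l0 := hMl0.trans (hnest T l0 hTl0 hl0m)
  set S := (Finset.Icc 1 m).filter (fun k => M k ⊆ F k ∧ T ≤ k) with hS
  have hl0S : l0 ∈ S := by
    simp only [hS, Finset.mem_filter]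
    exact ⟨hl0I, hMl0', hTl0⟩
  have hSne : S.Nonempty := ⟨l0, hl0S⟩
  set ℓ := S.min' hSne with hℓdef
  have hℓS := S.min'_mem hSne
  replace hℓS := Finset.mem_filter.mp hℓS
  refine ⟨ℓ, hℓS.1, hℓS.2.1, hℓS.2.2, ?_, ?_⟩
  · intro ℓ' h1 h2 h3
    exact S.min'_le ℓ' (by simp only [hS, Finset.mem_filter]; exact ⟨h1, h2, h3⟩)
  · set A := (Finset.Icc 1 m).filter (fun k => M k ⊆ F k ∧ k < T) with hA
    have hl0nA : l0 ∉ A := by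
      simp only [hA, Finset.mem_filter]
      rintro ⟨_, _, h⟩; omega
    have hAI : ∀ k ∈ insert l0 A, k ∈ Finset.Icc 1 m := by
      intro k hk
      rcases Finset.mem_insert.mp hk with rfl | hk
      · exact hl0I
      · exact (Finset.mem_filter.mp hk).1
    have hsub : ∀ k ∈ insert l0 A, M k ⊆ F T := by
      intro k hk
      rcases Finset.mem_insert.mp hk with rfl | hk
      · exact hMl0
      · obtain ⟨hkI, hMk, hkT⟩ := Finset.mem_filter.mp hk
        exact hMk.trans (hnest k T (le_of_lt hkT) hTm)
    have hbu : ((insert l0 A).biUnion M).card = ∑ k ∈ insert l0 A, (M k).card :=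
      Finset.card_biUnion (fun i hi j hj hij => hdisj i (hAI i hi) j (hAI j hj) hij)
    have hbu2 : ((insert l0 A).biUnion M) ⊆ F T := by
      intro x hx
      obtain ⟨k, hk, hxk⟩ := Finset.mem_biUnion.mp hx
      exact hsub k hk hxk
    have hsum : ∑ k ∈ insert l0 A, k ≤ (F T).card := by
      calc ∑ k ∈ insert l0 A, k = ∑ k ∈ insert l0 A, (M k).card :=
            Finset.sum_congr rfl (fun k hk => (hcard k (hAI k hk)).symm)
        _ = ((insert l0 A).biUnion M).card := hbu.symm
        _ ≤ (F T).card := Finset.card_le_card hbu2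
    have hsum2 : l0 + ∑ k ∈ A, k ≤ (F T).card := by
      rwa [Finset.sum_insert hl0nA] at hsum
    have hℓl0 : ℓ ≤ l0 := S.min'_le l0 hl0S
    have hfin : ((∑ k ∈ A, k : ℕ) : ℝ) + (ℓ : ℝ) ≤ ((F T).card : ℝ) := by
      have : (∑ k ∈ A, k) + ℓ ≤ (F T).card := by omega
      exact_mod_cast this
    exact hfin.trans (hFcard T hT)
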